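/- For all natural numbers ℓ and N with ℓ ≤ N, the integral over ℂ of the function z ↦ (ℓ − N·|z|²/(1+|z|²) + (1−|z|²)/(1+|z|²)) · |z|^(2ℓ)/(1+|z|²)^(N+2) · 2 with respect to Lebesgue measure equals 0. (This is the statement ∫_{S²} Φ·(ψ₀ − (|z|²−1)/(|z|²+1)) ω_FS = 0, where ψ₀(z) = ℓ − N|z|²/(1+|z|²), Φ(z) = |z|^(2ℓ)/(1+|z|²)^N, and ω_FS = i dz∧dz̄/(1+|z|²)² with i dz∧dz̄ = 2 dA.) -/

import Mathlib

open MeasureTheory Set Real Filter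

lemma futaki_radial (ℓ N : ℕ) (h : ℓ ≤ N) :
    ∫ r in Set.Ioi (0:ℝ), r * (((ℓ : ℝ) - (N : ℝ) * r ^ 2 / (1 + r ^ 2) +
        (1 - r ^ 2) / (1 + r ^ 2)) * (r ^ (2 * ℓ) / (1 + r ^ 2) ^ (N + 2)) * 2) = 0 := by
  set F : ℝ → ℝ := fun r => r * (((ℓ : ℝ) - (N : ℝ) * r ^ 2 / (1 + r ^ 2) +
        (1 - r ^ 2) / (1 + r ^ 2)) * (r ^ (2 * ℓ) / (1 + r ^ 2) ^ (N + 2)) * 2) with hF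
  set H : ℝ → ℝ := fun r => r ^ (2 * ℓ + 2) / (1 + r ^ 2) ^ (N + 2) with hH
  have hne : ∀ r : ℝ, (1 + r ^ 2) ≠ 0 := fun r => by positivity
  have hderiv : ∀ r : ℝ, HasDerivAt H (F r) r := by
    intro r
    have h1 : HasDerivAt (fun r : ℝ => r ^ (2 * ℓ + 2))
        (((2 * ℓ + 2 : ℕ) : ℝ) * r ^ (2 * ℓ + 1)) r := by
      simpa using hasDerivAt_pow (2 * ℓ + 2) r
    have hb : HasDerivAt (fun r : ℝ => 1 + r ^ 2) (2 * r) r := by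
      simpa using (hasDerivAt_pow 2 r).const_add 1
    have h2 : HasDerivAt (fun r : ℝ => (1 + r ^ 2) ^ (N + 2))
        (((N + 2 : ℕ) : ℝ) * (1 + r ^ 2) ^ (N + 1) * (2 * r)) r := by
      simpa using hb.fun_pow (N + 2)
    have := h1.fun_div h2 (pow_ne_zero _ (hne r))
    refine this.congr_deriv ?_
    rw [hF]
    field_simp
    push_cast
    ring
  have hbound : ∀ r : ℝ, ‖F r‖ ≤ (2 * (2 * (N:ℝ) + 1)) * (1 / (1 + r ^ 2)) := by
    intro r
    have h1 : (0:ℝ) < 1 + r ^ 2 := by positivity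
    have h1' : (1:ℝ) ≤ 1 + r ^ 2 := by nlinarith
    have habs : |r| ≤ 1 + r ^ 2 := by nlinarith [abs_nonneg r, sq_abs r]
    have hA : |((ℓ : ℝ) - (N : ℝ) * r ^ 2 / (1 + r ^ 2) + (1 - r ^ 2) / (1 + r ^ 2))|
        ≤ 2 * (N:ℝ) + 1 := by
      have e1 : (0:ℝ) ≤ (N : ℝ) * r ^ 2 / (1 + r ^ 2) := by positivity
      have e2 : (N : ℝ) * r ^ 2 / (1 + r ^ 2) ≤ N := by
        rw [div_le_iff₀ h1]; nlinarith [Nat.cast_nonneg (α := ℝ) N]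
      have e3 : |(1 - r ^ 2) / (1 + r ^ 2)| ≤ 1 := by
        rw [abs_div, abs_of_pos h1, div_le_one h1, abs_le]
        constructor <;> nlinarith
      have hl : (ℓ : ℝ) ≤ N := by exact_mod_cast h
      have hl0 : (0:ℝ) ≤ (ℓ : ℝ) := Nat.cast_nonneg ℓ
      rw [abs_le]
      constructor <;> nlinarith [abs_le.1 e3]
    have key : |r| * |r| ^ (2 * ℓ) ≤ (1 + r ^ 2) ^ (ℓ + 1) := by
      have hr2l : |r| ^ (2 * ℓ) ≤ (1 + r ^ 2) ^ ℓ := by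
        calc |r| ^ (2 * ℓ) = (r ^ 2) ^ ℓ := by rw [← sq_abs, ← pow_mul]
          _ ≤ (1 + r ^ 2) ^ ℓ := by gcongr; linarith
      calc |r| * |r| ^ (2 * ℓ) ≤ (1 + r ^ 2) * (1 + r ^ 2) ^ ℓ :=
            mul_le_mul habs hr2l (by positivity) (by positivity)
        _ = (1 + r ^ 2) ^ (ℓ + 1) := by ring
    have hB : |r * (r ^ (2 * ℓ) / (1 + r ^ 2) ^ (N + 2)) * 2| ≤ 2 * (1 / (1 + r ^ 2)) := by
      have e : |r * (r ^ (2 * ℓ) / (1 + r ^ 2) ^ (N + 2)) * 2|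
          = 2 * (|r| * |r| ^ (2 * ℓ)) / (1 + r ^ 2) ^ (N + 2) := by
        rw [abs_mul, abs_mul, abs_div, abs_pow, abs_pow, abs_of_pos h1, abs_two]
        ring
      rw [e, mul_one_div, div_le_div_iff₀ (by positivity) h1]
      calc 2 * (|r| * |r| ^ (2 * ℓ)) * (1 + r ^ 2)
          ≤ 2 * (1 + r ^ 2) ^ (ℓ + 1) * (1 + r ^ 2) := by nlinarith [key]
        _ = 2 * (1 + r ^ 2) ^ (ℓ + 2) := by ring
        _ ≤ 2 * (1 + r ^ 2) ^ (N + 2) := by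
            have := pow_le_pow_right₀ h1' (show ℓ + 2 ≤ N + 2 by omega)
            linarith
    calc ‖F r‖ = |((ℓ : ℝ) - (N : ℝ) * r ^ 2 / (1 + r ^ 2) + (1 - r ^ 2) / (1 + r ^ 2))| *
          |r * (r ^ (2 * ℓ) / (1 + r ^ 2) ^ (N + 2)) * 2| := by
          rw [hF, Real.norm_eq_abs, ← abs_mul]; congr 1; ring
      _ ≤ (2 * (N:ℝ) + 1) * (2 * (1 / (1 + r ^ 2))) :=
          mul_le_mul hA hB (abs_nonneg _) (by positivity)
      _ = (2 * (2 * (N:ℝ) + 1)) * (1 / (1 + r ^ 2)) := by ring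
  have hden : Continuous (fun r : ℝ => 1 + r ^ 2) := continuous_const.add (continuous_pow 2)
  have hHcont : Continuous H :=
    (continuous_pow _).div (hden.pow _) (fun x => pow_ne_zero _ (hne x))
  have hFcont : Continuous F :=
    continuous_id.mul
      ((((continuous_const.sub ((continuous_const.mul (continuous_pow 2)).div hden hne)).add
          ((continuous_const.sub (continuous_pow 2)).div hden hne)).mul
        ((continuous_pow _).div (hden.pow _) (fun x => pow_ne_zero _ (hne x)))).mul
        continuous_const)
  have hFint : IntegrableOn F (Set.Ioi (0:ℝ)) := by
    have hint : Integrable (fun r : ℝ => (2 * (2 * (N:ℝ) + 1)) * (1 / (1 + r ^ 2))) :=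
      by simpa [one_div] using (integrable_inv_one_add_sq.const_mul (2 * (2 * (N:ℝ) + 1)))
    exact (hint.mono' hFcont.aestronglyMeasurable
      (Filter.Eventually.of_forall (fun r => by
        simpa using hbound r))).integrableOn
  have htend : Tendsto H atTop (nhds 0) := by
    have hup : ∀ r : ℝ, H r ≤ 1 / (1 + r ^ 2) := by
      intro r
      have h1 : (0:ℝ) < 1 + r ^ 2 := by positivity
      have h1' : (1:ℝ) ≤ 1 + r ^ 2 := by nlinarith
      rw [hH]
      rw [div_le_div_iff₀ (by positivity) h1]
      have k1 : r ^ (2 * ℓ + 2) = (r ^ 2) ^ (ℓ + 1) := by rw [← pow_mul]; ring_nf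
      have k2 : (r ^ 2) ^ (ℓ + 1) ≤ (1 + r ^ 2) ^ (ℓ + 1) := by gcongr; linarith
      calc r ^ (2 * ℓ + 2) * (1 + r ^ 2) ≤ (1 + r ^ 2) ^ (ℓ + 1) * (1 + r ^ 2) := by
            rw [k1]; nlinarith [k2]
        _ = (1 + r ^ 2) ^ (ℓ + 2) := by ring
        _ ≤ (1 + r ^ 2) ^ (N + 2) := pow_le_pow_right₀ h1' (by omega)
        _ = 1 * (1 + r ^ 2) ^ (N + 2) := by ring
    have hlo : ∀ r : ℝ, 0 ≤ H r := fun r => div_nonneg (Even.pow_nonneg ⟨ℓ + 1, by ring⟩ r) (by positivity)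
    have hg : Tendsto (fun r : ℝ => 1 / (1 + r ^ 2)) atTop (nhds 0) := by
      simp only [one_div]
      exact tendsto_inv_atTop_zero.comp
        (tendsto_atTop_add_const_left _ _ (tendsto_pow_atTop two_ne_zero))
    exact squeeze_zero hlo hup hg
  have := integral_Ioi_of_hasDerivAt_of_tendsto
    (a := 0) (f := H) (f' := F) (m := 0)
    (hHcont.continuousWithinAt)
    (fun x _ => hderiv x) hFint htend
  rw [hF] at this ⊢
  rw [this, hH]
  norm_num

lemma integral_comp_abs_complex (g : ℝ → ℝ) :
    (∫ z : ℂ, g ‖z‖) = (∫ r in Set.Ioi (0:ℝ), r * g r) * (2 * π) := by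
  rw [← Complex.integral_comp_polarCoord_symm (fun z => g ‖z‖)]
  have htarget : polarCoord.target = Set.Ioi (0:ℝ) ×ˢ Set.Ioo (-π) π := rfl
  rw [htarget]
  have hcongr : ∀ p ∈ Set.Ioi (0:ℝ) ×ˢ Set.Ioo (-π) π,
      p.1 • g ‖Complex.polarCoord.symm p‖ =
        (fun r => r * g r) p.1 * (fun _ : ℝ => (1:ℝ)) p.2 := by
    rintro ⟨r, θ⟩ ⟨hr, hθ⟩
    simp only [Complex.norm_polarCoord_symm, smul_eq_mul, mul_one]
    rw [abs_of_pos (by exact hr)]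
  rw [setIntegral_congr_fun
    ((measurableSet_Ioi).prod measurableSet_Ioo) hcongr]
  rw [Measure.volume_eq_prod]
  refine (setIntegral_prod_mul (fun r : ℝ => r * g r) (fun _ : ℝ => (1:ℝ))
    (Set.Ioi 0) (Set.Ioo (-π) π)).trans ?_
  have h2 : (∫ _ in Set.Ioo (-π) π, (1:ℝ)) = 2 * π := by
    simp [Real.volume_Ioo]
    rw [max_eq_left (by positivity)]
    ring
  exact congrArg (HMul.hMul (∫ r in Set.Ioi (0:ℝ), r * g r)) h2

theorem futaki_Phi_psi0_integral (ℓ N : ℕ) (h : ℓ ≤ N) :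
    ∫ z : ℂ, ((ℓ : ℝ) - (N : ℝ) * ‖z‖ ^ 2 / (1 + ‖z‖ ^ 2) +
        (1 - ‖z‖ ^ 2) / (1 + ‖z‖ ^ 2)) *
      (‖z‖ ^ (2 * ℓ) / (1 + ‖z‖ ^ 2) ^ (N + 2)) * 2 = 0 := by
  exact (integral_comp_abs_complex (fun r : ℝ => ((ℓ : ℝ) - (N : ℝ) * r ^ 2 / (1 + r ^ 2) +
        (1 - r ^ 2) / (1 + r ^ 2)) * (r ^ (2 * ℓ) / (1 + r ^ 2) ^ (N + 2)) * 2)).trans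
    (mul_eq_zero_of_left (futaki_radial ℓ N h) _)
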